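/- Let q be a real number with q > 0 and q ≠ 1, let k ≥ 1 and n be natural numbers, and let x_1, …, x_k be real numbers. Then the q-multinomial formula holds: ∏_{j=1}^{k} ∏_{i=1}^{n} (1 + x_j q^{i−1}) = Σ C_q(n; r_1,…,r_k) · ∏_{j=1}^{k} [ x_j^{r_j} · q^{r_j(r_j−1)/2} · ∏_{i=1}^{s_{j−1}} (1 + x_j q^{n − s_{j−1} + i − 1}) ], where the sum is over all tuples (r_1,…,r_k) of natural numbers with r_1 + ⋯ + r_k ≤ n, and s_j = r_1 + ⋯ + r_j with s_0 = 0. -/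

import Mathlib

noncomputable def qNum (q : ℝ) (m : ℤ) : ℝ := (1 - q ^ m) / (1 - q)

noncomputable def qFactorial (q : ℝ) (n : ℕ) : ℝ :=
  ∏ i ∈ Finset.range n, qNum q ((i : ℤ) + 1)

noncomputable def qFacOrd (q : ℝ) (x : ℤ) (r : ℕ) : ℝ :=
  ∏ i ∈ Finset.range r, qNum q (x - (i : ℤ))

noncomputable def qMultinomial (q : ℝ) (x : ℤ) {k : ℕ} (r : Fin k → ℕ) : ℝ :=
  qFacOrd q x (∑ j, r j) / ∏ j, qFactorial q (r j)

noncomputable def qBinom (q : ℝ) (m : ℤ) (r : ℕ) : ℝ := qFacOrd q m r / qFactorial q r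

section basic
variable {q : ℝ}

lemma qNum_zero : qNum q 0 = 0 := by simp [qNum]

lemma pow_ne_one' (hq : 0 < q) (hq1 : q ≠ 1) (m : ℕ) (hm : m ≠ 0) : q ^ m ≠ 1 := by
  intro h
  rcases lt_trichotomy q 1 with h1 | h1 | h1
  · have := pow_lt_one₀ (le_of_lt hq) h1 hm
    linarith
  · exact hq1 h1
  · have := one_lt_pow₀ h1 hm
    linarith

lemma qNum_nat_ne_zero (hq : 0 < q) (hq1 : q ≠ 1) (m : ℕ) (hm : m ≠ 0) : qNum q (m : ℤ) ≠ 0 := by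
  have h1 : (1 : ℝ) - q ≠ 0 := fun h => hq1 (by linarith)
  have h2 : q ^ (m : ℤ) = q ^ m := zpow_natCast q m
  have : (1 : ℝ) - q ^ (m : ℤ) ≠ 0 := by
    rw [h2]; intro h; exact pow_ne_one' hq hq1 m hm (by linarith)
  exact div_ne_zero this h1

lemma qFactorial_ne_zero (hq : 0 < q) (hq1 : q ≠ 1) (r : ℕ) : qFactorial q r ≠ 0 := by
  unfold qFactorial
  apply Finset.prod_ne_zero_iff.mpr
  intro i _
  have : ((i : ℤ) + 1) = ((i + 1 : ℕ) : ℤ) := by push_cast; ring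
  rw [this]
  exact qNum_nat_ne_zero hq hq1 (i+1) (Nat.succ_ne_zero i)

lemma qFactorial_succ (r : ℕ) : qFactorial q (r+1) = qFactorial q r * qNum q ((r:ℤ)+1) :=
  Finset.prod_range_succ _ _

lemma qFacOrd_zero (x : ℤ) : qFacOrd q x 0 = 1 := by simp [qFacOrd]

lemma qFacOrd_succ_front (x : ℤ) (r : ℕ) :
    qFacOrd q x (r+1) = qNum q x * qFacOrd q (x-1) r := by
  unfold qFacOrd
  rw [Finset.prod_range_succ']
  simp only [Nat.cast_add, Nat.cast_one]
  rw [mul_comm]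
  congr 1
  · simp
  · apply Finset.prod_congr rfl
    intro i _
    congr 1
    push_cast
    ring

lemma qFacOrd_succ (x : ℤ) (r : ℕ) :
    qFacOrd q x (r+1) = qFacOrd q x r * qNum q (x - r) :=
  Finset.prod_range_succ _ _

lemma qFacOrd_add (x : ℤ) (a b : ℕ) :
    qFacOrd q x (a+b) = qFacOrd q x a * qFacOrd q (x - a) b := by
  unfold qFacOrd
  rw [Finset.prod_range_add]
  congr 1
  apply Finset.prod_congr rfl
  intro i _
  congr 1
  push_cast
  ring

lemma qBinom_zero (x : ℤ) : qBinom q x 0 = 1 := by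
  simp [qBinom, qFacOrd, qFactorial]

lemma qBinom_eq_zero {m r : ℕ} (h : m < r) : qBinom q (m : ℤ) r = 0 := by
  unfold qBinom qFacOrd
  rw [Finset.prod_eq_zero (Finset.mem_range.mpr h) (by simp [qNum]), zero_div]

lemma qBinom_pascal (hq : 0 < q) (hq1 : q ≠ 1) (n : ℤ) (r : ℕ) :
    qBinom q (n+1) (r+1) = q ^ (r+1) * qBinom q n (r+1) + qBinom q n r := by
  have hq0 : q ≠ 0 := ne_of_gt hq
  have h1q : (1:ℝ) - q ≠ 0 := fun h => hq1 (by linarith)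
  have key : qNum q (n+1) = q^(r+1) * qNum q (n - r) + qNum q ((r:ℤ)+1) := by
    unfold qNum
    have : q ^ ((n : ℤ) + 1) = q ^ ((r:ℕ)+1) * q ^ ((n:ℤ) - (r:ℕ)) := by
      rw [← zpow_natCast q (r+1), ← zpow_add₀ hq0]
      congr 1
      push_cast
      ring
    have h2 : q ^ ((r:ℤ)+1) = q ^ (r+1) := by
      rw [show ((r:ℤ)+1) = ((r+1:ℕ):ℤ) by push_cast; ring, zpow_natCast]
    rw [this, h2]
    field_simp
    ring
  have e1 : qFacOrd q (n+1) (r+1) = qNum q (n+1) * qFacOrd q n r := by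
    rw [qFacOrd_succ_front]; congr 2; ring
  have e2 : qFacOrd q n (r+1) = qFacOrd q n r * qNum q (n - r) := qFacOrd_succ n r
  have hF := qFactorial_ne_zero hq hq1 r
  have hN : qNum q ((r:ℤ)+1) ≠ 0 := by
    have : ((r : ℤ) + 1) = ((r + 1 : ℕ) : ℤ) := by push_cast; ring
    rw [this]; exact qNum_nat_ne_zero hq hq1 (r+1) (Nat.succ_ne_zero r)
  unfold qBinom
  rw [e1, e2, qFactorial_succ, key]
  field_simp

end basic

lemma qbinom_thm {q : ℝ} (hq : 0 < q) (hq1 : q ≠ 1) (n : ℕ) (x : ℝ) :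
    ∏ i ∈ Finset.range n, (1 + x * q ^ i) =
    ∑ r ∈ Finset.range (n+1), qBinom q (n : ℤ) r * (x ^ r * q ^ (r*(r-1)/2)) := by
  induction n generalizing x with
  | zero => simp [qBinom_zero]
  | succ n ih =>
    have hcast : ((n+1 : ℕ) : ℤ) = (n : ℤ) + 1 := by push_cast; ring
    have etri : ∀ r : ℕ, (r+1)*((r+1)-1)/2 = r*(r-1)/2 + r := by
      intro r
      simp only [Nat.add_sub_cancel]
      exact Nat.triangle_succ r
    have step : ∏ i ∈ Finset.range (n+1), (1 + x * q ^ i)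
        = (1 + x) * ∑ r ∈ Finset.range (n+1), qBinom q (n:ℤ) r * ((x*q) ^ r * q ^ (r*(r-1)/2)) := by
      rw [← ih (x*q), Finset.prod_range_succ']
      have h00 : (1 + x * q ^ 0) = 1 + x := by simp
      rw [h00, mul_comm]
      congr 1
      exact Finset.prod_congr rfl fun i _ => by ring
    rw [step]
    have lhs_eq : (1 + x) * ∑ r ∈ Finset.range (n+1), qBinom q (n:ℤ) r * ((x*q) ^ r * q ^ (r*(r-1)/2))
        = (∑ r ∈ Finset.range (n+1), qBinom q (n:ℤ) r * (x ^ r * q ^ (r*(r-1)/2 + r)))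
          + ∑ r ∈ Finset.range (n+1), qBinom q (n:ℤ) r * (x ^ (r+1) * q ^ (r*(r-1)/2 + r)) := by
      rw [Finset.mul_sum, ← Finset.sum_add_distrib]
      exact Finset.sum_congr rfl fun r _ => by ring
    rw [lhs_eq]
    have key : ∀ r : ℕ, qBinom q ((n+1 : ℕ) : ℤ) (r+1) * (x ^ (r+1) * q ^ ((r+1)*((r+1)-1)/2))
        = qBinom q (n:ℤ) (r+1) * (x ^ (r+1) * q ^ (r*(r-1)/2 + r + (r+1)))
          + qBinom q (n:ℤ) r * (x ^ (r+1) * q ^ (r*(r-1)/2 + r)) := by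
      intro r
      rw [hcast, qBinom_pascal hq hq1, etri r]
      ring
    have rhsplit : ∑ r ∈ Finset.range (n+1),
          qBinom q ((n+1:ℕ):ℤ) (r+1) * (x ^ (r+1) * q ^ ((r+1)*((r+1)-1)/2))
        = (∑ r ∈ Finset.range (n+1), qBinom q (n:ℤ) (r+1) * (x ^ (r+1) * q ^ (r*(r-1)/2 + r + (r+1))))
          + ∑ r ∈ Finset.range (n+1), qBinom q (n:ℤ) r * (x ^ (r+1) * q ^ (r*(r-1)/2 + r)) := by
      rw [← Finset.sum_add_distrib]
      exact Finset.sum_congr rfl fun r _ => key r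
    have h0 : qBinom q ((n+1:ℕ):ℤ) 0 * (x ^ 0 * q ^ (0*(0-1)/2)) = 1 := by
      simp [qBinom_zero]
    have rhs_eq : ∑ r ∈ Finset.range (n+1+1), qBinom q ((n+1:ℕ):ℤ) r * (x ^ r * q ^ (r*(r-1)/2))
        = (∑ r ∈ Finset.range (n+1),
            qBinom q ((n+1:ℕ):ℤ) (r+1) * (x ^ (r+1) * q ^ ((r+1)*((r+1)-1)/2))) + 1 := by
      rw [Finset.sum_range_succ', h0]
    have hS1 : ∑ r ∈ Finset.range (n+1), qBinom q (n:ℤ) r * (x ^ r * q ^ (r*(r-1)/2 + r))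
        = (∑ r ∈ Finset.range n, qBinom q (n:ℤ) (r+1) * (x ^ (r+1) * q ^ (r*(r-1)/2 + r + (r+1))))
          + 1 := by
      rw [Finset.sum_range_succ']
      have hz : qBinom q (n:ℤ) 0 * (x ^ 0 * q ^ (0*(0-1)/2 + 0)) = 1 := by simp [qBinom_zero]
      rw [hz]
      congr 1
      apply Finset.sum_congr rfl
      intro r _
      rw [etri r]
    have hA : ∑ r ∈ Finset.range (n+1), qBinom q (n:ℤ) (r+1) * (x ^ (r+1) * q ^ (r*(r-1)/2 + r + (r+1)))
        = ∑ r ∈ Finset.range n, qBinom q (n:ℤ) (r+1) * (x ^ (r+1) * q ^ (r*(r-1)/2 + r + (r+1))) := by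
      rw [Finset.sum_range_succ, qBinom_eq_zero (Nat.lt_succ_self n)]
      simp
    rw [rhs_eq, rhsplit, hS1, hA]
    ring

def pS {k : ℕ} (r : Fin k → ℕ) (j : Fin k) : ℕ :=
  ∑ i' ∈ Finset.univ.filter (fun i' => i' < j), r i'

def PP {k : ℕ} (r : Fin k → ℕ) (t : ℕ) : ℕ :=
  ∑ i' ∈ Finset.univ.filter (fun i' : Fin k => (i' : ℕ) < t), r i'

lemma pS_eq_PP {k : ℕ} (r : Fin k → ℕ) (j : Fin k) : pS r j = PP r (j : ℕ) := by
  unfold pS PP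
  congr 1

lemma PP_zero {k : ℕ} (r : Fin k → ℕ) : PP r 0 = 0 := by
  simp [PP]

lemma PP_succ {k : ℕ} (r : Fin k → ℕ) {t : ℕ} (ht : t < k) :
    PP r (t+1) = PP r t + r ⟨t, ht⟩ := by
  unfold PP
  have hins : (Finset.univ.filter (fun i' : Fin k => (i' : ℕ) < t + 1))
      = insert ⟨t, ht⟩ (Finset.univ.filter (fun i' : Fin k => (i' : ℕ) < t)) := by
    ext i
    simp only [Finset.mem_filter, Finset.mem_univ, true_and, Finset.mem_insert]
    rw [Nat.lt_succ_iff_lt_or_eq]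
    constructor
    · rintro (h | h)
      · right; exact h
      · left; exact Fin.ext h
    · rintro (rfl | h)
      · right; rfl
      · left; exact h
  rw [hins, Finset.sum_insert (by simp)]
  ring

lemma PP_ge {k : ℕ} (r : Fin k → ℕ) {t : ℕ} (ht : k ≤ t) : PP r t = ∑ j, r j := by
  unfold PP
  congr 1
  ext i
  simp only [Finset.mem_filter, Finset.mem_univ, true_and, iff_true]
  exact lt_of_lt_of_le i.isLt ht

lemma pS_zero {k : ℕ} (r : Fin (k+1) → ℕ) : pS r 0 = 0 := by
  unfold pS
  rw [Finset.filter_false_of_mem (fun i _ => Fin.not_lt_zero i)]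
  simp

lemma pS_succ {k : ℕ} (r : Fin (k+1) → ℕ) (j : Fin k) :
    pS r j.succ = r 0 + pS (Fin.tail r) j := by
  unfold pS
  have hins : (Finset.univ.filter (fun i' : Fin (k+1) => i' < j.succ))
      = insert 0 ((Finset.univ.filter (fun i' : Fin k => i' < j)).image Fin.succ) := by
    ext i
    simp only [Finset.mem_filter, Finset.mem_univ, true_and, Finset.mem_insert,
      Finset.mem_image]
    constructor
    · intro hi
      rcases Fin.eq_zero_or_eq_succ i with h | ⟨i', rfl⟩
      · left; exact h
      · right; exact ⟨i', by simpa [Fin.succ_lt_succ_iff] using hi, rfl⟩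
    · rintro (rfl | ⟨i', hi', rfl⟩)
      · exact Fin.succ_pos j
      · exact Fin.succ_lt_succ_iff.mpr hi'
  rw [hins, Finset.sum_insert (by simp [Fin.succ_ne_zero]),
    Finset.sum_image (fun a _ b _ h => Fin.succ_injective _ h)]
  rfl

lemma pS_le_total {k : ℕ} (r : Fin k → ℕ) (j : Fin k) : pS r j ≤ ∑ j', r j' := by
  unfold pS
  exact Finset.sum_le_sum_of_subset (Finset.filter_subset _ _)

lemma prod_qBinom_eq_zero {q : ℝ} {k m : ℕ} (r : Fin k → ℕ) (h : ¬ (∑ j, r j ≤ m)) :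
    ∏ j, qBinom q ((m : ℤ) - pS r j) (r j) = 0 := by
  have hT : ∃ t, m < PP r t := ⟨k, by rw [PP_ge r le_rfl]; omega⟩
  obtain ⟨s, hs⟩ : ∃ s, Nat.find hT = s + 1 := by
    have : Nat.find hT ≠ 0 := by
      intro h0
      have := Nat.find_spec hT
      rw [h0, PP_zero] at this
      omega
    exact ⟨Nat.find hT - 1, by omega⟩
  have hspec : m < PP r (s+1) := by rw [← hs]; exact Nat.find_spec hT
  have hmin : ¬ m < PP r s := Nat.find_min hT (by omega)
  have hsk : s < k := by
    by_contra hc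
    rw [PP_ge r (by omega), ← PP_ge r (le_of_not_gt hc)] at hspec
    omega
  set j : Fin k := ⟨s, hsk⟩
  have hPP : PP r (s+1) = PP r s + r j := PP_succ r hsk
  have h1 : m - PP r s < r j := by omega
  have h2 : (m : ℤ) - pS r j = ((m - PP r s : ℕ) : ℤ) := by
    rw [pS_eq_PP, Nat.cast_sub (by omega)]
  apply Finset.prod_eq_zero (Finset.mem_univ j)
  rw [h2]
  exact qBinom_eq_zero h1

noncomputable def Gterm (q : ℝ) {k N : ℕ} (m : ℕ) (x : Fin k → ℝ) (r : Fin k → Fin (N+1)) : ℝ :=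
  (∏ j, qBinom q ((m:ℤ) - pS (fun j' => (r j' : ℕ)) j) ((r j : ℕ))) *
  ∏ j, (x j ^ (r j : ℕ) * q ^ ((r j : ℕ) * ((r j : ℕ) - 1) / 2) *
    ∏ i ∈ Finset.range (pS (fun j' => (r j' : ℕ)) j),
      (1 + x j * q ^ (m - pS (fun j' => (r j' : ℕ)) j + i)))

lemma Gterm_cons {q : ℝ} {k N : ℕ} (m : ℕ) (x : Fin (k+1) → ℝ)
    (r₀ : Fin (N+1)) (r' : Fin k → Fin (N+1)) :
    Gterm q m x (Fin.cons r₀ r') =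
      (qBinom q (m:ℤ) (r₀:ℕ) *
       ∏ j, qBinom q ((m:ℤ) - ((r₀:ℕ) + pS (fun j' => (r' j' : ℕ)) j)) ((r' j : ℕ))) *
      ((x 0 ^ (r₀:ℕ) * q ^ ((r₀:ℕ) * ((r₀:ℕ)-1)/2)) *
       ∏ j, (x j.succ ^ (r' j : ℕ) * q ^ ((r' j : ℕ)*((r' j : ℕ)-1)/2) *
         ∏ i ∈ Finset.range ((r₀:ℕ) + pS (fun j' => (r' j' : ℕ)) j),
           (1 + x j.succ * q ^ (m - ((r₀:ℕ) + pS (fun j' => (r' j' : ℕ)) j) + i)))) := by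
  have hfun : (fun j' => ((Fin.cons r₀ r' : Fin (k+1) → Fin (N+1)) j' : ℕ))
      = Fin.cons (r₀ : ℕ) (fun j => (r' j : ℕ)) := by
    funext j'
    refine Fin.cases ?_ ?_ j' <;> simp
  unfold Gterm
  rw [hfun, Fin.prod_univ_succ, Fin.prod_univ_succ]
  simp only [Fin.cons_zero, Fin.cons_succ, pS_zero, pS_succ, Fin.tail_cons,
    Nat.cast_zero, sub_zero, Finset.range_zero, Finset.prod_empty, mul_one]
  push_cast
  rfl

lemma Gterm_cons_eq {q : ℝ} {k N : ℕ} {m : ℕ} (x : Fin (k+1) → ℝ)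
    (r₀ : Fin (N+1)) (hr₀ : (r₀:ℕ) ≤ m) (r' : Fin k → Fin (N+1)) :
    Gterm q m x (Fin.cons r₀ r') =
      (qBinom q (m:ℤ) (r₀:ℕ) * (x 0 ^ (r₀:ℕ) * q ^ ((r₀:ℕ)*((r₀:ℕ)-1)/2))) *
      ((∏ j : Fin k, ∏ i ∈ Finset.range (r₀:ℕ), (1 + x j.succ * q ^ ((m - (r₀:ℕ)) + i))) *
       Gterm q (m - (r₀:ℕ)) (fun j => x j.succ) r') := by
  rw [Gterm_cons]
  have hB : ∀ j : Fin k, qBinom q ((m:ℤ) - ((r₀:ℕ) + pS (fun j' => (r' j' : ℕ)) j)) ((r' j : ℕ))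
      = qBinom q (((m - (r₀:ℕ) : ℕ) : ℤ) - pS (fun j' => (r' j' : ℕ)) j) ((r' j : ℕ)) := by
    intro j
    congr 1
    rw [Nat.cast_sub hr₀]
    push_cast
    ring
  by_cases hsum : ∑ j, (r' j : ℕ) ≤ m - (r₀ : ℕ)
  · have hps : ∀ j : Fin k, pS (fun j' => (r' j' : ℕ)) j ≤ m - (r₀:ℕ) :=
      fun j => le_trans (pS_le_total _ j) hsum
    have hWT : ∏ j : Fin k, (x j.succ ^ (r' j : ℕ) * q ^ ((r' j : ℕ)*((r' j : ℕ)-1)/2) *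
          ∏ i ∈ Finset.range ((r₀:ℕ) + pS (fun j' => (r' j' : ℕ)) j),
            (1 + x j.succ * q ^ (m - ((r₀:ℕ) + pS (fun j' => (r' j' : ℕ)) j) + i)))
        = (∏ j : Fin k, (x j.succ ^ (r' j : ℕ) * q ^ ((r' j : ℕ)*((r' j : ℕ)-1)/2) *
            ∏ i ∈ Finset.range (pS (fun j' => (r' j' : ℕ)) j),
              (1 + x j.succ * q ^ ((m - (r₀:ℕ)) - pS (fun j' => (r' j' : ℕ)) j + i)))) *
          ∏ j : Fin k, ∏ i ∈ Finset.range (r₀:ℕ), (1 + x j.succ * q ^ ((m - (r₀:ℕ)) + i)) := by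
      rw [← Finset.prod_mul_distrib]
      apply Finset.prod_congr rfl
      intro j _
      have hT : (∏ i ∈ Finset.range ((r₀:ℕ) + pS (fun j' => (r' j' : ℕ)) j),
            (1 + x j.succ * q ^ (m - ((r₀:ℕ) + pS (fun j' => (r' j' : ℕ)) j) + i)))
          = (∏ i ∈ Finset.range (pS (fun j' => (r' j' : ℕ)) j),
              (1 + x j.succ * q ^ ((m - (r₀:ℕ)) - pS (fun j' => (r' j' : ℕ)) j + i))) *
            ∏ i ∈ Finset.range (r₀:ℕ), (1 + x j.succ * q ^ ((m - (r₀:ℕ)) + i)) := by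
        set s := pS (fun j' => (r' j' : ℕ)) j with hs
        rw [show (r₀:ℕ) + s = s + (r₀:ℕ) from Nat.add_comm _ _, Finset.prod_range_add]
        congr 1
        · apply Finset.prod_congr rfl
          intro i _
          have he : m - (s + (r₀:ℕ)) + i = (m - (r₀:ℕ)) - s + i := by omega
          rw [he]
        · apply Finset.prod_congr rfl
          intro i _
          have he : m - (s + (r₀:ℕ)) + ((s:ℕ) + i) = (m - (r₀:ℕ)) + i := by
            have := hps j; omega
          rw [he]
      rw [hT]
      ring
    rw [hWT, Finset.prod_congr rfl (fun j _ => hB j)]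
    unfold Gterm
    beta_reduce
    ring
  · have hz : ∏ j : Fin k,
        qBinom q (((m - (r₀:ℕ) : ℕ) : ℤ) - pS (fun j' => (r' j' : ℕ)) j) ((r' j : ℕ)) = 0 :=
      prod_qBinom_eq_zero _ hsum
    rw [Finset.prod_congr rfl (fun j _ => hB j), hz]
    unfold Gterm
    beta_reduce
    rw [hz]
    ring

lemma G_lemma {q : ℝ} (hq : 0 < q) (hq1 : q ≠ 1) (N : ℕ) :
    ∀ (k m : ℕ), m ≤ N → ∀ (x : Fin k → ℝ),
    ∏ j, ∏ i ∈ Finset.range m, (1 + x j * q ^ i) =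
      ∑ r : Fin k → Fin (N+1), Gterm q m x r := by
  intro k
  induction k with
  | zero =>
    intro m hm x
    rw [Fin.prod_univ_zero]
    have h1 : ∀ r : Fin 0 → Fin (N+1), Gterm q m x r = 1 := by
      intro r
      unfold Gterm
      simp
    rw [Finset.sum_congr rfl (fun r _ => h1 r), Finset.sum_const]
    simp
  | succ k ih =>
    intro m hm x
    have hre : ∑ r : Fin (k+1) → Fin (N+1), Gterm q m x r
        = ∑ r₀ : Fin (N+1), ∑ r' : Fin k → Fin (N+1), Gterm q m x (Fin.cons r₀ r') := by
      rw [← Equiv.sum_comp (Fin.consEquiv (fun _ : Fin (k+1) => Fin (N+1))) (Gterm q m x),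
        Fintype.sum_prod_type]
      rfl
    rw [hre, Fin.prod_univ_succ]
    have inner : ∀ r₀ : Fin (N+1),
        ∑ r' : Fin k → Fin (N+1), Gterm q m x (Fin.cons r₀ r')
        = (qBinom q (m:ℤ) (r₀:ℕ) * (x 0 ^ (r₀:ℕ) * q ^ ((r₀:ℕ)*((r₀:ℕ)-1)/2))) *
          ∏ j : Fin k, ∏ i ∈ Finset.range m, (1 + x j.succ * q ^ i) := by
      intro r₀
      by_cases hr₀ : (r₀ : ℕ) ≤ m
      · rw [Finset.sum_congr rfl (fun r' _ => Gterm_cons_eq x r₀ hr₀ r')]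
        rw [← Finset.mul_sum, ← Finset.mul_sum]
        rw [← ih (m - (r₀:ℕ)) (by omega) (fun j => x j.succ)]
        congr 1
        rw [← Finset.prod_mul_distrib]
        apply Finset.prod_congr rfl
        intro j _
        beta_reduce
        rw [mul_comm, ← Finset.prod_range_add (fun i => 1 + x j.succ * q ^ i) (m - (r₀:ℕ)) (r₀:ℕ)]
        rw [Nat.sub_add_cancel hr₀]
      · have hB0 : qBinom q (m:ℤ) (r₀:ℕ) = 0 := qBinom_eq_zero (by omega)
        have hz : ∀ r' : Fin k → Fin (N+1), Gterm q m x (Fin.cons r₀ r') = 0 := by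
          intro r'
          rw [Gterm_cons, hB0]
          ring
        rw [Finset.sum_congr rfl (fun r' _ => hz r'), Finset.sum_const, hB0]
        simp
    rw [Finset.sum_congr rfl (fun r₀ _ => inner r₀), ← Finset.sum_mul]
    congr 1
    rw [qbinom_thm hq hq1 m (x 0),
      Fin.sum_univ_eq_sum_range (fun r => qBinom q (m:ℤ) r * (x 0 ^ r * q ^ (r*(r-1)/2))) (N+1)]
    apply Finset.sum_subset
    · exact Finset.range_subset_range.mpr (by omega)
    · intro r _ hr
      have hmr : m < r := by
        simp only [Finset.mem_range] at hr
        omega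
      rw [qBinom_eq_zero hmr]
      ring

lemma qFacOrd_sum {q : ℝ} : ∀ {k : ℕ} (x : ℤ) (r : Fin k → ℕ),
    qFacOrd q x (∑ j, r j) = ∏ j, qFacOrd q (x - pS r j) (r j) := by
  intro k
  induction k with
  | zero =>
    intro x r
    simp [qFacOrd]
  | succ k ih =>
    intro x r
    rw [Fin.sum_univ_succ, qFacOrd_add, Fin.prod_univ_succ]
    congr 1
    · rw [pS_zero]
      norm_num
    · calc qFacOrd q (x - (r 0 : ℤ)) (∑ j : Fin k, r j.succ)
          = ∏ j : Fin k, qFacOrd q ((x - (r 0 : ℤ)) - pS (Fin.tail r) j) (Fin.tail r j) :=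
            ih (x - (r 0 : ℤ)) (Fin.tail r)
        _ = ∏ j : Fin k, qFacOrd q (x - pS r j.succ) (r j.succ) := by
            apply Finset.prod_congr rfl
            intro j _
            rw [pS_succ]
            congr 1
            push_cast
            ring

lemma qMultinomial_eq {q : ℝ} {k : ℕ} (x : ℤ) (r : Fin k → ℕ) :
    qMultinomial q x r = ∏ j, qBinom q (x - pS r j) (r j) := by
  unfold qMultinomial qBinom
  rw [qFacOrd_sum, ← Finset.prod_div_distrib]


/-- q-multinomial formula:
    ∏_j ∏_{i=1}^n (1 + x_j q^(i−1)) =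
    Σ_{r, Σr_j ≤ n} C_q(n; r) ∏_j x_j^(r_j) q^(r_j(r_j−1)/2) ∏_{i=1}^{s_{j−1}} (1 + x_j q^(n−s_{j−1}+i−1)). -/
theorem qMultinomial_formula (q : ℝ) (hq : 0 < q) (hq1 : q ≠ 1)
    (k n : ℕ) (hk : 1 ≤ k) (x : Fin k → ℝ) :
    ∏ j : Fin k, ∏ i ∈ Finset.range n, (1 + x j * q ^ i) =
      ∑ r ∈ Finset.univ.filter (fun r : Fin k → Fin (n + 1) => ∑ j, (r j : ℕ) ≤ n),
        qMultinomial q (n : ℤ) (fun j => (r j : ℕ)) *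
          ∏ j : Fin k,
            x j ^ (r j : ℕ) * q ^ ((r j : ℕ) * ((r j : ℕ) - 1) / 2) *
              ∏ i ∈ Finset.range (∑ i' ∈ Finset.univ.filter (fun i' => i' < j), (r i' : ℕ)),
                (1 + x j * q ^ (n - (∑ i' ∈ Finset.univ.filter (fun i' => i' < j), (r i' : ℕ)) + i)) := by
  rw [G_lemma hq hq1 n k n le_rfl x]
  symm
  rw [Finset.sum_filter]
  apply Finset.sum_congr rfl
  intro r _
  by_cases hc : ∑ j, (r j : ℕ) ≤ n
  · rw [if_pos hc, qMultinomial_eq]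
    unfold Gterm
    simp only [pS]
  · rw [if_neg hc]
    unfold Gterm
    rw [prod_qBinom_eq_zero _ hc]
    ring
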